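/- Let E be a constant real 3×3 matrix, α, β, ε > 0, and f : ℝ³ → ℝ a square-integrable continuous function. Suppose φ_t, φ_c : ℝ³ → ℝ are twice continuously differentiable with compact support and satisfy on ℝ³: −∇·(E∇φ_t) + (α²/ε²)(φ_t − φ_c) = −(α²/ε²) f and −∇·(E∇φ_c) − (β²/ε²)(φ_t − φ_c) = (β²/ε²) f. If moreover XᵀEX ≥ 0 for all X ∈ ℝ³, then ‖φ_t − φ_c‖_{L²(ℝ³)} ≤ ‖f‖_{L²(ℝ³)}. -/

import Mathlib

open Matrix MeasureTheory

/-- Partial derivative `∂_i u` of a function `u : ℝ³ → ℝ`. -/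
noncomputable def pd3 (u : (Fin 3 → ℝ) → ℝ) (i : Fin 3) (x : Fin 3 → ℝ) : ℝ :=
  fderiv ℝ u x (Pi.single i 1)

/-- The operator `∇·(E∇u) = ∑_{i,j} E i j * ∂_i ∂_j u` for a constant matrix `E`. -/
noncomputable def divEgrad (E : Matrix (Fin 3) (Fin 3) ℝ) (u : (Fin 3 → ℝ) → ℝ)
    (x : Fin 3 → ℝ) : ℝ :=
  ∑ i, ∑ j, E i j * pd3 (pd3 u j) i x

open RealInnerProductSpace

lemma pd3_contDiff {u : (Fin 3 → ℝ) → ℝ} (hu : ContDiff ℝ 2 u) (j : Fin 3) :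
    ContDiff ℝ 1 (pd3 u j) := by
  have h : ContDiff ℝ 1 (fderiv ℝ u) := hu.fderiv_right (by norm_num)
  exact (ContinuousLinearMap.apply ℝ ℝ (Pi.single j 1 : Fin 3 → ℝ)).contDiff.comp h

lemma pd3_hcs {u : (Fin 3 → ℝ) → ℝ} (hu : HasCompactSupport u) (j : Fin 3) :
    HasCompactSupport (pd3 u j) := hu.fderiv_apply (𝕜 := ℝ) (Pi.single j 1)

lemma pd3_cont {u : (Fin 3 → ℝ) → ℝ} (hu : ContDiff ℝ 2 u) (i j : Fin 3) :
    Continuous (pd3 (pd3 u j) i) :=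
  (ContinuousLinearMap.apply ℝ ℝ (Pi.single i 1 : Fin 3 → ℝ)).continuous.comp
    ((pd3_contDiff hu j).continuous_fderiv one_ne_zero)

lemma ibp {u : (Fin 3 → ℝ) → ℝ} (hu : ContDiff ℝ 2 u) (hcs : HasCompactSupport u)
    (i j : Fin 3) :
    ∫ x, u x * pd3 (pd3 u j) i x = - ∫ x, pd3 u i x * pd3 u j x := by
  have hgc : Continuous (pd3 u j) := (pd3_contDiff hu j).continuous
  have huc : Continuous u := hu.continuous
  exact integral_mul_fderiv_eq_neg_fderiv_mul_of_integrable
    (((pd3_contDiff hu i).continuous.mul hgc).integrable_of_hasCompactSupport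
      ((pd3_hcs hcs i).mul_right))
    ((huc.mul (pd3_cont hu i j)).integrable_of_hasCompactSupport hcs.mul_right)
    ((huc.mul hgc).integrable_of_hasCompactSupport hcs.mul_right)
    (fun x _ => hu.differentiable (by norm_num) x)
    (fun x _ => (pd3_contDiff hu j).differentiable one_ne_zero x)

lemma pd3_sub {u v : (Fin 3 → ℝ) → ℝ} (hu : Differentiable ℝ u) (hv : Differentiable ℝ v)
    (j : Fin 3) : pd3 (fun x => u x - v x) j = fun x => pd3 u j x - pd3 v j x := by
  funext x
  simp only [pd3]
  rw [fderiv_fun_sub (hu x) (hv x)]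
  rfl

lemma divEgrad_sub {E : Matrix (Fin 3) (Fin 3) ℝ} {u v : (Fin 3 → ℝ) → ℝ}
    (hu : ContDiff ℝ 2 u) (hv : ContDiff ℝ 2 v) (x : Fin 3 → ℝ) :
    divEgrad E (fun y => u y - v y) x = divEgrad E u x - divEgrad E v x := by
  have key : ∀ i j, pd3 (pd3 (fun y => u y - v y) j) i x
      = pd3 (pd3 u j) i x - pd3 (pd3 v j) i x := by
    intro i j
    rw [pd3_sub (hu.differentiable (by norm_num)) (hv.differentiable (by norm_num)) j,
      pd3_sub ((pd3_contDiff hu j).differentiable one_ne_zero)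
        ((pd3_contDiff hv j).differentiable one_ne_zero) i]
  simp only [divEgrad, key, mul_sub, Finset.sum_sub_distrib]

lemma hcs_sub {u v : (Fin 3 → ℝ) → ℝ} (hu : HasCompactSupport u) (hv : HasCompactSupport v) :
    HasCompactSupport (fun x => u x - v x) := by
  simpa [sub_eq_add_neg, Pi.add_def, Pi.neg_apply] using hu.add (HasCompactSupport.neg hv)

lemma quad_expand (E : Matrix (Fin 3) (Fin 3) ℝ) (X : Fin 3 → ℝ) :
    X ⬝ᵥ E.mulVec X = ∑ p : Fin 3 × Fin 3, E p.1 p.2 * (X p.1 * X p.2) := by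
  rw [Fintype.sum_prod_type]
  simp only [dotProduct, Matrix.mulVec, Finset.mul_sum]
  refine Finset.sum_congr rfl fun i _ => Finset.sum_congr rfl fun j _ => by ring

theorem stmt2 (E : Matrix (Fin 3) (Fin 3) ℝ)
    (hE : ∀ X : Fin 3 → ℝ, 0 ≤ X ⬝ᵥ E.mulVec X)
    (α β ε : ℝ) (hα : 0 < α) (hβ : 0 < β) (hε : 0 < ε)
    (f : (Fin 3 → ℝ) → ℝ) (hfc : Continuous f) (hf2 : MemLp f 2 volume)
    (φt φc : (Fin 3 → ℝ) → ℝ)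
    (hφt : ContDiff ℝ 2 φt) (hφtc : HasCompactSupport φt)
    (hφc : ContDiff ℝ 2 φc) (hφcc : HasCompactSupport φc)
    (heqt : ∀ x, -divEgrad E φt x + α ^ 2 / ε ^ 2 * (φt x - φc x) = -(α ^ 2 / ε ^ 2) * f x)
    (heqc : ∀ x, -divEgrad E φc x - β ^ 2 / ε ^ 2 * (φt x - φc x) = β ^ 2 / ε ^ 2 * f x) :
    eLpNorm (fun x => φt x - φc x) 2 volume ≤ eLpNorm f 2 volume := by
  set ψ : (Fin 3 → ℝ) → ℝ := fun x => φt x - φc x with hψdef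
  have hψ : ContDiff ℝ 2 ψ := hφt.sub hφc
  have hψc : HasCompactSupport ψ := hcs_sub hφtc hφcc
  have hψcont : Continuous ψ := hψ.continuous
  set k : ℝ := (α ^ 2 + β ^ 2) / ε ^ 2 with hkdef
  have hk : 0 < k := by positivity
  -- the PDE for ψ
  have hPDE : ∀ x, -divEgrad E ψ x + k * ψ x = -k * f x := by
    intro x
    show -divEgrad E (fun y => φt y - φc y) x + k * (φt x - φc x) = -k * f x
    rw [divEgrad_sub hφt hφc x, hkdef]
    linear_combination heqt x - heqc x
  -- continuity and integrability
  have hLcont : Continuous (divEgrad E ψ) := by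
    apply continuous_finset_sum
    intro i _
    apply continuous_finset_sum
    intro j _
    exact continuous_const.mul (pd3_cont hψ i j)
  have hI_ψψ : Integrable (fun x => ψ x * ψ x) volume :=
    (hψcont.mul hψcont).integrable_of_hasCompactSupport hψc.mul_right
  have hI_ψf : Integrable (fun x => ψ x * f x) volume :=
    (hψcont.mul hfc).integrable_of_hasCompactSupport hψc.mul_right
  have hI_ψL : Integrable (fun x => ψ x * divEgrad E ψ x) volume :=
    (hψcont.mul hLcont).integrable_of_hasCompactSupport hψc.mul_right
  have hIq : ∀ p : Fin 3 × Fin 3, Integrable (fun x => pd3 ψ p.1 x * pd3 ψ p.2 x) volume :=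
    fun p => ((pd3_contDiff hψ p.1).continuous.mul
      (pd3_contDiff hψ p.2).continuous).integrable_of_hasCompactSupport
      (pd3_hcs hψc p.1).mul_right
  have hIψpp : ∀ p : Fin 3 × Fin 3, Integrable (fun x => ψ x * pd3 (pd3 ψ p.2) p.1 x) volume :=
    fun p => (hψcont.mul (pd3_cont hψ p.1 p.2)).integrable_of_hasCompactSupport hψc.mul_right
  -- ∫ ψ ∇·(E∇ψ) ≤ 0
  have e1 : ∫ x, ψ x * divEgrad E ψ x
      = ∑ p : Fin 3 × Fin 3, E p.1 p.2 * ∫ x, ψ x * pd3 (pd3 ψ p.2) p.1 x := by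
    have hfe : (fun x => ψ x * divEgrad E ψ x)
        = fun x => ∑ p : Fin 3 × Fin 3, E p.1 p.2 * (ψ x * pd3 (pd3 ψ p.2) p.1 x) := by
      funext x
      rw [Fintype.sum_prod_type]
      simp only [divEgrad, Finset.mul_sum]
      refine Finset.sum_congr rfl fun i _ => Finset.sum_congr rfl fun j _ => by ring
    rw [hfe, integral_finset_sum _ (fun p _ => (hIψpp p).const_mul _)]
    exact Finset.sum_congr rfl fun p _ => integral_const_mul _ _
  have e2 : ∫ x, ψ x * divEgrad E ψ x
      = -∑ p : Fin 3 × Fin 3, E p.1 p.2 * ∫ x, pd3 ψ p.1 x * pd3 ψ p.2 x := by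
    rw [e1, ← Finset.sum_neg_distrib]
    refine Finset.sum_congr rfl fun p _ => ?_
    rw [ibp hψ hψc p.1 p.2]
    ring
  have e3 : ∑ p : Fin 3 × Fin 3, E p.1 p.2 * ∫ x, pd3 ψ p.1 x * pd3 ψ p.2 x
      = ∫ x, ∑ p : Fin 3 × Fin 3, E p.1 p.2 * (pd3 ψ p.1 x * pd3 ψ p.2 x) := by
    rw [integral_finset_sum _ (fun p _ => (hIq p).const_mul _)]
    exact Finset.sum_congr rfl fun p _ => (integral_const_mul _ _).symm
  have hI1 : ∫ x, ψ x * divEgrad E ψ x ≤ 0 := by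
    have hq : 0 ≤ ∫ x, ∑ p : Fin 3 × Fin 3, E p.1 p.2 * (pd3 ψ p.1 x * pd3 ψ p.2 x) := by
      refine integral_nonneg fun x => ?_
      have := hE (fun i => pd3 ψ i x)
      rwa [quad_expand] at this
    rw [e2]
    rw [e3]
    linarith
  -- energy identity and main integral inequality
  have hpt : ∀ x, k * (ψ x * ψ x) = ψ x * divEgrad E ψ x - k * (ψ x * f x) :=
    fun x => by linear_combination (ψ x) * (hPDE x)
  have hint : k * ∫ x, ψ x * ψ x
      = (∫ x, ψ x * divEgrad E ψ x) - k * ∫ x, ψ x * f x := by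
    rw [← integral_const_mul]
    calc ∫ x, k * (ψ x * ψ x)
        = ∫ x, (ψ x * divEgrad E ψ x - k * (ψ x * f x)) := by simp only [hpt]
      _ = (∫ x, ψ x * divEgrad E ψ x) - ∫ x, k * (ψ x * f x) :=
          integral_sub hI_ψL (hI_ψf.const_mul k)
      _ = (∫ x, ψ x * divEgrad E ψ x) - k * ∫ x, ψ x * f x := by
          rw [integral_const_mul]
  have key : ∫ x, ψ x * ψ x ≤ -∫ x, ψ x * f x := by
    have h2 : k * ∫ x, ψ x * ψ x ≤ k * (-∫ x, ψ x * f x) := by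
      rw [hint]; linarith
    exact le_of_mul_le_mul_left h2 hk
  -- pass to L²
  have hψ2 : MemLp ψ 2 volume := hψcont.memLp_of_hasCompactSupport hψc
  set Ψ : Lp ℝ 2 (volume : Measure (Fin 3 → ℝ)) := hψ2.toLp ψ with hΨdef
  set F : Lp ℝ 2 (volume : Measure (Fin 3 → ℝ)) := hf2.toLp f with hFdef
  have hΨae : Ψ =ᵐ[volume] ψ := hψ2.coeFn_toLp
  have hFae : F =ᵐ[volume] f := hf2.coeFn_toLp
  have hin1 : ⟪Ψ, Ψ⟫ = ∫ x, ψ x * ψ x := by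
    rw [MeasureTheory.L2.inner_def]
    refine integral_congr_ae ?_
    filter_upwards [hΨae] with x hx
    rw [hx]
    simp [RCLike.inner_apply]
    ring
  have hin2 : ⟪Ψ, F⟫ = ∫ x, ψ x * f x := by
    rw [MeasureTheory.L2.inner_def]
    refine integral_congr_ae ?_
    filter_upwards [hΨae, hFae] with x hx hfx
    rw [hx, hfx]
    simp [RCLike.inner_apply]
    ring
  have hns : ‖Ψ‖ ^ 2 ≤ ‖Ψ‖ * ‖F‖ := by
    have a1 : ‖Ψ‖ ^ 2 = ⟪Ψ, Ψ⟫ := (real_inner_self_eq_norm_sq Ψ).symm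
    have a2 : ⟪Ψ, -F⟫ ≤ ‖Ψ‖ * ‖-F‖ := real_inner_le_norm _ _
    rw [inner_neg_right, norm_neg] at a2
    calc ‖Ψ‖ ^ 2 = ∫ x, ψ x * ψ x := by rw [a1, hin1]
      _ ≤ -∫ x, ψ x * f x := key
      _ = -⟪Ψ, F⟫ := by rw [hin2]
      _ ≤ ‖Ψ‖ * ‖F‖ := a2
  have hnorm : ‖Ψ‖ ≤ ‖F‖ := by
    rcases eq_or_lt_of_le (norm_nonneg Ψ) with h | h
    · rw [← h]; exact norm_nonneg F
    · nlinarith [hns]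
  have hfin : (eLpNorm ψ 2 volume).toReal ≤ (eLpNorm f 2 volume).toReal := by
    rw [← MeasureTheory.Lp.norm_toLp ψ hψ2, ← MeasureTheory.Lp.norm_toLp f hf2]
    exact hnorm
  exact (ENNReal.toReal_le_toReal hψ2.eLpNorm_ne_top hf2.eLpNorm_ne_top).mp hfin
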